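/- Let K(x) = x^10 (so k = 10), let D(x) = (190x³ + 7x²⁰⁰)/197, and d = D'(1) = (570 + 1400)/197 = 1970/197 = 10. Define Φ(α) = D(1 - K'(α)/k) + (d/k)(K(α) + (1-α)K'(α) - 1). Then Φ(0) = 0 and Φ(1) = 0, but there exists α ∈ (0,1) with Φ(α) > 0. -/

import Mathlib

/-- Example 1.7: with constant check degree `k = 10` (`K(x) = x¹⁰`) and
`D(x) = (190x³ + 7x²⁰⁰)/197` (so `d = D'(1) = 10`), the rank functional `Φ`
vanishes at `0` and `1` but is strictly positive somewhere in `(0,1)`. -/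
theorem stmt_7
    (D K : ℝ → ℝ)
    (hK : ∀ x, K x = x ^ 10)
    (hD : ∀ x, D x = (190 * x ^ 3 + 7 * x ^ 200) / 197)
    (d k : ℝ) (hd : d = 10) (hk : k = 10)
    (Φ : ℝ → ℝ)
    (hΦ : ∀ α, Φ α = D (1 - deriv K α / k) +
      (d / k) * (K α + (1 - α) * deriv K α - 1)) :
    Φ 0 = 0 ∧ Φ 1 = 0 ∧ ∃ α ∈ Set.Ioo (0:ℝ) 1, 0 < Φ α := by
  have hKfun : K = fun x : ℝ => x ^ 10 := funext hK
  have hderiv : ∀ α : ℝ, deriv K α = 10 * α ^ 9 := by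
    intro α
    rw [hKfun, deriv_pow_field]
    norm_num
  have hΦ' : ∀ α : ℝ, Φ α =
      (190 * (1 - α ^ 9) ^ 3 + 7 * (1 - α ^ 9) ^ 200) / 197 +
        (α ^ 10 + (1 - α) * (10 * α ^ 9) - 1) := by
    intro α
    rw [hΦ, hD, hK, hderiv, hd, hk]
    have e1 : 1 - 10 * α ^ 9 / 10 = 1 - α ^ 9 := by ring
    rw [e1, div_self (by norm_num : (10:ℝ) ≠ 0), one_mul]
  refine ⟨by rw [hΦ']; norm_num, by rw [hΦ']; norm_num, ⟨4/5, by norm_num, ?_⟩⟩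
  rw [hΦ' (4/5)]
  have h1 : (0:ℝ) < 7 * (1 - (4/5:ℝ) ^ 9) ^ 200 / 197 := by positivity
  nlinarith [h1]
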